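/- Let A be a nonnegative weakly irreducible tensor of order m and dimension n with slice sums ordered K_1 <= K_2 <= ... <= K_n, and let g be the girth (minimum circuit length) of the digraph G_A. Then (K_1 K_2 ... K_g)^{1/g} <= rho(A) <= (K_{n-g+1} K_{n-g+2} ... K_n)^{1/g}. -/

import Mathlib

set_option maxHeartbeats 1000000


open scoped BigOperators
open Finset

/-- The arc relation of the digraph `G_A` of an order-`m` dimension-`n` tensor `A`,
    whose entries are indexed by a head index and a tail of `m - 1` indices:
    `(i, j)` is an arc when some entry `a_{i i_2 ... i_m} ≠ 0` has `j` among `i_2, ..., i_m`. -/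
def tArc (m n : ℕ) (A : Fin n → (Fin (m - 1) → Fin n) → ℝ) (i j : Fin n) : Prop :=
  ∃ t : Fin (m - 1) → Fin n, A i t ≠ 0 ∧ j ∈ Set.range t

/-- A digraph (given by its arc relation) is strongly connected. -/
def StronglyConnected {n : ℕ} (arc : Fin n → Fin n → Prop) : Prop :=
  ∀ i j : Fin n, Relation.ReflTransGen arc i j

/-- `γ 0, γ 1, ..., γ p = γ 0` is a circuit (closed directed walk, loops allowed)
    of length `p` in the digraph with arc relation `arc`. -/
def IsCircuit {n : ℕ} (arc : Fin n → Fin n → Prop) (p : ℕ) (γ : ℕ → Fin n) : Prop :=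
  0 < p ∧ γ p = γ 0 ∧ ∀ j < p, arc (γ j) (γ (j + 1))

/-- `lam` is an eigenvalue of the order-`m` dimension-`n` real tensor `A`:
    there is a nonzero complex vector `x` with `A x^{m-1} = lam x^{[m-1]}`. -/
def IsEig (m n : ℕ) (A : Fin n → (Fin (m - 1) → Fin n) → ℝ) (lam : ℂ) : Prop :=
  ∃ x : Fin n → ℂ, x ≠ 0 ∧ ∀ i : Fin n,
    ∑ t : Fin (m - 1) → Fin n, (A i t : ℂ) * ∏ j, x (t j) = lam * x i ^ (m - 1)

/-- The spectral radius of a tensor: the supremum of moduli of its eigenvalues. -/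
noncomputable def specRad (m n : ℕ) (A : Fin n → (Fin (m - 1) → Fin n) → ℝ) : ℝ :=
  sSup {r : ℝ | ∃ lam : ℂ, IsEig m n A lam ∧ ‖lam‖ = r}

/-- The `i`-th slice sum `K_i = ∑_{i_2,...,i_m} a_{i i_2 ... i_m}`. -/
def sliceSum (m n : ℕ) (A : Fin n → (Fin (m - 1) → Fin n) → ℝ) (i : Fin n) : ℝ :=
  ∑ t : Fin (m - 1) → Fin n, A i t

/-- `(A x^{m-1})_i = ∑_{i_2,...,i_m} a_{i i_2 ... i_m} x_{i_2} ⋯ x_{i_m}`. -/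
def Ax (m n : ℕ) (A : Fin n → (Fin (m - 1) → Fin n) → ℝ) (x : Fin n → ℝ) (i : Fin n) : ℝ :=
  ∑ t : Fin (m - 1) → Fin n, A i t * ∏ j, x (t j)

section Basic
variable {m n : ℕ} {A : Fin n → (Fin (m - 1) → Fin n) → ℝ}

lemma Ax_nonneg (hA : ∀ i t, 0 ≤ A i t) {x : Fin n → ℝ} (hx : ∀ i, 0 ≤ x i) (i : Fin n) :
    0 ≤ Ax m n A x i :=
  Finset.sum_nonneg fun t _ => mul_nonneg (hA i t) (Finset.prod_nonneg fun j _ => hx _)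

lemma Ax_le (hA : ∀ i t, 0 ≤ A i t) {x : Fin n → ℝ} (hx : ∀ i, 0 ≤ x i) {i s : Fin n}
    (hs : ∀ j, tArc m n A i j → x j ≤ x s) :
    Ax m n A x i ≤ sliceSum m n A i * x s ^ (m - 1) := by
  rw [sliceSum, Finset.sum_mul]
  refine Finset.sum_le_sum fun t _ => ?_
  by_cases h0 : A i t = 0
  · simp [h0]
  · refine mul_le_mul_of_nonneg_left ?_ (hA i t)
    calc ∏ j, x (t j) ≤ ∏ _j : Fin (m - 1), x s :=
          Finset.prod_le_prod (fun j _ => hx _) (fun j _ => hs (t j) ⟨t, h0, ⟨j, rfl⟩⟩)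
      _ = x s ^ (m - 1) := by simp

lemma Ax_ge (hA : ∀ i t, 0 ≤ A i t) {x : Fin n → ℝ} (hx : ∀ i, 0 ≤ x i) {i s : Fin n}
    (hs : ∀ j, tArc m n A i j → x s ≤ x j) :
    sliceSum m n A i * x s ^ (m - 1) ≤ Ax m n A x i := by
  rw [sliceSum, Finset.sum_mul]
  refine Finset.sum_le_sum fun t _ => ?_
  by_cases h0 : A i t = 0
  · simp [h0]
  · refine mul_le_mul_of_nonneg_left ?_ (hA i t)
    calc x s ^ (m - 1) = ∏ _j : Fin (m - 1), x s := by simp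
      _ ≤ ∏ j, x (t j) :=
          Finset.prod_le_prod (fun j _ => hx _) (fun j _ => hs (t j) ⟨t, h0, ⟨j, rfl⟩⟩)

lemma Ax_mono_tensor {B : Fin n → (Fin (m - 1) → Fin n) → ℝ} (hAB : ∀ i t, A i t ≤ B i t)
    {x : Fin n → ℝ} (hx : ∀ i, 0 ≤ x i) (i : Fin n) : Ax m n A x i ≤ Ax m n B x i :=
  Finset.sum_le_sum fun t _ =>
    mul_le_mul_of_nonneg_right (hAB i t) (Finset.prod_nonneg fun j _ => hx _)

lemma Ax_mono_vec (hA : ∀ i t, 0 ≤ A i t) {x y : Fin n → ℝ} (hx : ∀ i, 0 ≤ x i)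
    (hxy : ∀ i, x i ≤ y i) (i : Fin n) : Ax m n A x i ≤ Ax m n A y i :=
  Finset.sum_le_sum fun t _ => mul_le_mul_of_nonneg_left
    (Finset.prod_le_prod (fun j _ => hx _) (fun j _ => hxy _)) (hA i t)

lemma Ax_gain (hA : ∀ i t, 0 ≤ A i t) {x y : Fin n → ℝ} (hx : ∀ i, 0 ≤ x i)
    (hxy : ∀ i, x i ≤ y i) (i : Fin n) (t₀ : Fin (m - 1) → Fin n) :
    Ax m n A x i + A i t₀ * (∏ j, y (t₀ j) - ∏ j, x (t₀ j)) ≤ Ax m n A y i := by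
  have h : ∀ t, A i t * ∏ j, x (t j) + A i t * (∏ j, y (t j) - ∏ j, x (t j))
      = A i t * ∏ j, y (t j) := fun t => by ring
  have key : A i t₀ * (∏ j, y (t₀ j) - ∏ j, x (t₀ j))
      ≤ ∑ t : Fin (m - 1) → Fin n, A i t * (∏ j, y (t j) - ∏ j, x (t j)) := by
    exact Finset.single_le_sum
      (f := fun t => A i t * (∏ j, y (t j) - ∏ j, x (t j)))
      (fun t _ => mul_nonneg (hA i t)
        (sub_nonneg.2 (Finset.prod_le_prod (fun j _ => hx _) (fun j _ => hxy _)))) (mem_univ t₀)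
  have : Ax m n A x i + ∑ t : Fin (m - 1) → Fin n, A i t * (∏ j, y (t j) - ∏ j, x (t j))
      = Ax m n A y i := by
    rw [Ax, Ax, ← Finset.sum_add_distrib]
    exact Finset.sum_congr rfl fun t _ => h t
  linarith [key]

lemma Ax_smul (c : ℝ) (x : Fin n → ℝ) (i : Fin n) :
    Ax m n A (fun j => c * x j) i = c ^ (m - 1) * Ax m n A x i := by
  rw [Ax, Ax, Finset.mul_sum]
  refine Finset.sum_congr rfl fun t _ => ?_
  rw [Finset.prod_mul_distrib, Finset.prod_const]
  simp; ring

lemma sliceSum_nonneg (hA : ∀ i t, 0 ≤ A i t) (i : Fin n) : 0 ≤ sliceSum m n A i :=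
  Finset.sum_nonneg fun t _ => hA i t

lemma sliceSum_pos (hA : ∀ i t, 0 ≤ A i t) {i : Fin n} (h : ∃ j, tArc m n A i j) :
    0 < sliceSum m n A i := by
  obtain ⟨j, t, ht, -⟩ := h
  have h1 : A i t ≤ sliceSum m n A i := Finset.single_le_sum (fun t _ => hA i t) (mem_univ t)
  have h2 : 0 < A i t := lt_of_le_of_ne (hA i t) (Ne.symm ht)
  linarith

end Basic

section Graph
variable {m n : ℕ} {A : Fin n → (Fin n → Fin n) → ℝ}

/-- Every vertex has an out-arc, given strong connectivity and existence of a circuit. -/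
lemma exists_out_arc {A : Fin n → (Fin (m - 1) → Fin n) → ℝ}
    (hirr : StronglyConnected (tArc m n A))
    {p : ℕ} {γ : ℕ → Fin n} (hc : IsCircuit (tArc m n A) p γ) (i : Fin n) :
    ∃ j, tArc m n A i j := by
  rcases (Relation.ReflTransGen.cases_head (hirr i (γ 0))) with h | ⟨c, hc', -⟩
  · subst h
    exact ⟨γ 1, hc.2.2 0 hc.1⟩
  · exact ⟨c, hc'⟩

/-- Pigeonhole: a periodic point with exact (minimal) period on the forward orbit of `z₀`. -/
lemma exists_periodic (hn : 0 < n) (σ : Fin n → Fin n) (z₀ : Fin n) :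
    ∃ (s q : ℕ), 0 < q ∧ σ^[q] (σ^[s] z₀) = σ^[s] z₀ ∧
      (∀ k l, k < q → l < q → σ^[k] (σ^[s] z₀) = σ^[l] (σ^[s] z₀) → k = l) := by
  classical
  obtain ⟨a, b, hab, heq⟩ := Fintype.exists_ne_map_eq_of_card_lt
    (fun k : Fin (n+1) => σ^[(k : ℕ)] z₀) (by simp)
  wlog h : (a : ℕ) < (b : ℕ) generalizing a b
  · exact this b a hab.symm heq.symm (by omega)
  set z := σ^[(a : ℕ)] z₀ with hz
  have hper : σ^[(b : ℕ) - (a : ℕ)] z = z := by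
    rw [hz, ← Function.iterate_add_apply]
    have : (b : ℕ) - (a : ℕ) + (a : ℕ) = (b : ℕ) := by omega
    rw [this, ← heq]
  have hEx : ∃ q, 0 < q ∧ σ^[q] z = z := ⟨(b : ℕ) - (a : ℕ), by omega, hper⟩
  set q := Nat.find hEx with hq
  obtain ⟨hq0, hqper⟩ := Nat.find_spec hEx
  refine ⟨a, q, hq0, hqper, ?_⟩
  intro k l hk hl hkl
  by_contra hne
  wlog hlt : k < l generalizing k l
  · exact this l k hl hk hkl.symm (Ne.symm hne) (by omega)
  have : σ^[q - l + k] z = z := by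
    rw [Function.iterate_add_apply, hkl, ← Function.iterate_add_apply]
    have : q - l + l = q := by omega
    rw [this, hqper]
  have hcon := Nat.find_min hEx (m := q - l + k) (by omega)
  exact hcon ⟨by omega, this⟩

end Graph

section Products

/-- Rotation of a product along a cycle. -/
lemma prod_range_rotate (f : ℕ → ℝ) (q : ℕ) (hf : f q = f 0) (h0 : f 0 ≠ 0) :
    ∏ k ∈ Finset.range q, f (k + 1) = ∏ k ∈ Finset.range q, f k := by
  have h1 : (∏ k ∈ Finset.range q, f (k + 1)) * f 0 = ∏ k ∈ Finset.range (q + 1), f k :=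
    (Finset.prod_range_succ' f q).symm
  have h2 : ∏ k ∈ Finset.range (q + 1), f k = (∏ k ∈ Finset.range q, f k) * f 0 := by
    rw [Finset.prod_range_succ, hf]
  exact mul_right_cancel₀ h0 (by rw [h1, h2])

/-- For a strictly monotone map `Fin q → Fin n`, the `i`-th value is at least `i`. -/
lemma strictMono_fin_le {q n : ℕ} {f : Fin q → Fin n} (hf : StrictMono f) (i : Fin q) :
    (i : ℕ) ≤ (f i : ℕ) := by
  induction' hi : (i : ℕ) with k ih generalizing i
  · omega
  · have hk : k < q := by omega
    have := ih ⟨k, hk⟩ rfl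
    have hlt : f ⟨k, hk⟩ < f i := hf (by simp [Fin.lt_def, hi])
    simp only [Fin.lt_def] at hlt
    omega

lemma strictMono_fin_ge {q n : ℕ} {f : Fin q → Fin n} (hf : StrictMono f) (i : Fin q) :
    (f i : ℕ) ≤ n - q + (i : ℕ) := by
  have hqn : q ≤ n := by
    haveI : Nonempty (Fin q → Fin n) := ⟨f⟩
    have := Fintype.card_le_of_injective f hf.injective
    simpa using this
  have hi2 := i.2
  have hmain : ∀ d : ℕ, ∀ j : Fin q, (j : ℕ) + d = q - 1 → (f j : ℕ) ≤ n - 1 - d := by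
    intro d
    induction' d with d ih
    · intro j _
      have := (f j).2; omega
    · intro j hj
      have hj1 : (j : ℕ) + 1 < q := by omega
      have hlt : f j < f ⟨(j : ℕ) + 1, hj1⟩ := hf (by simp [Fin.lt_def])
      have := ih ⟨(j : ℕ) + 1, hj1⟩ (by simp; omega)
      simp only [Fin.lt_def] at hlt
      omega
  have := hmain (q - 1 - (i : ℕ)) i (by omega)
  omega

end Products

section SubsetProd
variable {n : ℕ} (K : Fin n → ℝ)

/-- `K` extended to `ℕ` by `1`. -/
noncomputable def Kext (K : Fin n → ℝ) : ℕ → ℝ := fun k => if h : k < n then K ⟨k, h⟩ else 1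

variable {K}

lemma Kext_pos (hK : ∀ i, 0 < K i) (k : ℕ) : 0 < Kext K k := by
  unfold Kext; split <;> [exact hK _; norm_num]

lemma Kext_mono (hmono : ∀ i j : Fin n, i ≤ j → K i ≤ K j) {k l : ℕ} (hkl : k ≤ l)
    (hl : l < n) : Kext K k ≤ Kext K l := by
  unfold Kext
  rw [dif_pos hl, dif_pos (lt_of_le_of_lt hkl hl)]
  exact hmono _ _ hkl

lemma prod_subset_ge (hK : ∀ i, 0 < K i) (hmono : ∀ i j : Fin n, i ≤ j → K i ≤ K j)
    {S : Finset (Fin n)} {q : ℕ} (hcard : S.card = q) :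
    ∏ k ∈ Finset.range q, Kext K k ≤ ∏ i ∈ S, K i := by
  have hqn : q ≤ n := by
    rw [← hcard]
    simpa using Finset.card_le_card (Finset.subset_univ S)
  set e := S.orderIsoOfFin hcard with he
  have hprod : ∏ i ∈ S, K i = ∏ k : Fin q, K ((e k : { x // x ∈ S }) : Fin n) := by
    rw [← Finset.prod_attach S K]
    exact (Equiv.prod_comp e.toEquiv (fun s : { x // x ∈ S } => K (s : Fin n))).symm
  have hle : ∀ k : Fin q, (k : ℕ) ≤ (((e k) : { x // x ∈ S }) : Fin n) := by
    intro k
    refine strictMono_fin_le (f := fun k => ((e k : { x // x ∈ S }) : Fin n)) ?_ k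
    intro a b hab
    exact (Subtype.coe_lt_coe).2 (e.strictMono hab)
  rw [hprod, ← Fin.prod_univ_eq_prod_range (fun k => Kext K k) q]
  refine Finset.prod_le_prod (fun k _ => le_of_lt (Kext_pos hK _)) (fun k _ => ?_)
  have h1 : Kext K (k : ℕ) = K ⟨(k : ℕ), lt_of_lt_of_le k.2 hqn⟩ := dif_pos _
  rw [h1]
  have h2 := hle k
  calc K ⟨(k : ℕ), _⟩ ≤ K ((e k : { x // x ∈ S }) : Fin n) := hmono _ _ (by
        rw [Fin.le_def]; exact h2)
    _ = K _ := rfl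

lemma prod_subset_le (hK : ∀ i, 0 < K i) (hmono : ∀ i j : Fin n, i ≤ j → K i ≤ K j)
    {S : Finset (Fin n)} {q : ℕ} (hcard : S.card = q) :
    ∏ i ∈ S, K i ≤ ∏ k ∈ Finset.Ico (n - q) n, Kext K k := by
  have hqn : q ≤ n := by
    rw [← hcard]
    simpa using Finset.card_le_card (Finset.subset_univ S)
  set e := S.orderIsoOfFin hcard with he
  have hprod : ∏ i ∈ S, K i = ∏ k : Fin q, K ((e k : { x // x ∈ S }) : Fin n) := by
    rw [← Finset.prod_attach S K]
    exact (Equiv.prod_comp e.toEquiv (fun s : { x // x ∈ S } => K (s : Fin n))).symm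
  have hge : ∀ k : Fin q, ((((e k) : { x // x ∈ S }) : Fin n) : ℕ) ≤ n - q + (k : ℕ) := by
    intro k
    refine strictMono_fin_ge (f := fun k => ((e k : { x // x ∈ S }) : Fin n)) ?_ k
    intro a b hab
    exact (Subtype.coe_lt_coe).2 (e.strictMono hab)
  rw [Finset.prod_Ico_eq_prod_range, hprod]
  have hnq : n - (n - q) = q := by omega
  rw [hnq, ← Fin.prod_univ_eq_prod_range (fun k => Kext K (n - q + k)) q]
  refine Finset.prod_le_prod (fun k _ => le_of_lt (hK _)) (fun k _ => ?_)
  have hlt : n - q + (k : ℕ) < n := by have := k.2; omega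
  have h1 : Kext K (n - q + (k : ℕ)) = K ⟨n - q + (k : ℕ), hlt⟩ := dif_pos _
  rw [h1]
  exact hmono _ _ (by rw [Fin.le_def]; exact hge k)

lemma pivot_low (hK : ∀ i, 0 < K i) (hmono : ∀ i j : Fin n, i ≤ j → K i ≤ K j)
    {g q : ℕ} (hg1 : 1 ≤ g) (hgq : g ≤ q) (hqn : q ≤ n) :
    (∏ k ∈ Finset.range g, Kext K k) ^ q ≤ (∏ k ∈ Finset.range q, Kext K k) ^ g := by
  set a := Kext K (g - 1) with ha
  have hapos : 0 < a := Kext_pos hK _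
  have hPg : 0 < ∏ k ∈ Finset.range g, Kext K k :=
    Finset.prod_pos fun k _ => Kext_pos hK k
  have hsplit : (∏ k ∈ Finset.range g, Kext K k) * ∏ k ∈ Finset.Ico g q, Kext K k
      = ∏ k ∈ Finset.range q, Kext K k := Finset.prod_range_mul_prod_Ico _ hgq
  have hPga : ∏ k ∈ Finset.range g, Kext K k ≤ a ^ g := by
    calc ∏ k ∈ Finset.range g, Kext K k ≤ ∏ _k ∈ Finset.range g, a :=
          Finset.prod_le_prod (fun k _ => le_of_lt (Kext_pos hK k))
            (fun k hk => Kext_mono hmono (by simp at hk; omega) (by omega))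
      _ = a ^ g := by rw [Finset.prod_const, Finset.card_range]
  have hTa : a ^ (q - g) ≤ ∏ k ∈ Finset.Ico g q, Kext K k := by
    calc a ^ (q - g) = ∏ _k ∈ Finset.Ico g q, a := by
          rw [Finset.prod_const, Nat.card_Ico]
      _ ≤ ∏ k ∈ Finset.Ico g q, Kext K k :=
          Finset.prod_le_prod (fun k _ => le_of_lt hapos)
            (fun k hk => Kext_mono hmono (by simp at hk; omega) (by simp at hk; omega))
  calc (∏ k ∈ Finset.range g, Kext K k) ^ q
      = (∏ k ∈ Finset.range g, Kext K k) ^ g * (∏ k ∈ Finset.range g, Kext K k) ^ (q - g) := by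
        rw [← pow_add]; congr 1; omega
    _ ≤ (∏ k ∈ Finset.range g, Kext K k) ^ g * (a ^ g) ^ (q - g) :=
        mul_le_mul_of_nonneg_left (pow_le_pow_left₀ (le_of_lt hPg) hPga _) (by positivity)
    _ = (∏ k ∈ Finset.range g, Kext K k) ^ g * (a ^ (q - g)) ^ g := by
        rw [← pow_mul, ← pow_mul, Nat.mul_comm]
    _ ≤ (∏ k ∈ Finset.range g, Kext K k) ^ g * (∏ k ∈ Finset.Ico g q, Kext K k) ^ g :=
        mul_le_mul_of_nonneg_left (pow_le_pow_left₀ (by positivity) hTa _) (by positivity)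
    _ = ((∏ k ∈ Finset.range g, Kext K k) * ∏ k ∈ Finset.Ico g q, Kext K k) ^ g := by
        rw [mul_pow]
    _ = (∏ k ∈ Finset.range q, Kext K k) ^ g := by rw [hsplit]

lemma pivot_top (hK : ∀ i, 0 < K i) (hmono : ∀ i j : Fin n, i ≤ j → K i ≤ K j)
    {g q : ℕ} (hg1 : 1 ≤ g) (hgq : g ≤ q) (hqn : q ≤ n) :
    (∏ k ∈ Finset.Ico (n - q) n, Kext K k) ^ g ≤ (∏ k ∈ Finset.Ico (n - g) n, Kext K k) ^ q := by
  set a := Kext K (n - g) with ha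
  have hgn : g ≤ n := le_trans hgq hqn
  have hapos : 0 < a := Kext_pos hK _
  have hPT : 0 < ∏ k ∈ Finset.Ico (n - g) n, Kext K k :=
    Finset.prod_pos fun k _ => Kext_pos hK k
  have hsplit : (∏ k ∈ Finset.Ico (n - q) (n - g), Kext K k) *
      ∏ k ∈ Finset.Ico (n - g) n, Kext K k = ∏ k ∈ Finset.Ico (n - q) n, Kext K k :=
    Finset.prod_Ico_consecutive _ (by omega) (by omega)
  have hH : ∏ k ∈ Finset.Ico (n - q) (n - g), Kext K k ≤ a ^ (q - g) := by
    calc ∏ k ∈ Finset.Ico (n - q) (n - g), Kext K k ≤ ∏ _k ∈ Finset.Ico (n - q) (n - g), a :=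
          Finset.prod_le_prod (fun k _ => le_of_lt (Kext_pos hK k))
            (fun k hk => Kext_mono hmono (by simp at hk; omega) (by omega))
      _ = a ^ (q - g) := by rw [Finset.prod_const, Nat.card_Ico]; congr 1; omega
  have hTa : a ^ g ≤ ∏ k ∈ Finset.Ico (n - g) n, Kext K k := by
    calc a ^ g = ∏ _k ∈ Finset.Ico (n - g) n, a := by
          rw [Finset.prod_const, Nat.card_Ico]; congr 1; omega
      _ ≤ ∏ k ∈ Finset.Ico (n - g) n, Kext K k :=
          Finset.prod_le_prod (fun k _ => le_of_lt hapos)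
            (fun k hk => Kext_mono hmono (by simp at hk; omega) (by simp at hk; omega))
  calc (∏ k ∈ Finset.Ico (n - q) n, Kext K k) ^ g
      = ((∏ k ∈ Finset.Ico (n - q) (n - g), Kext K k) *
          ∏ k ∈ Finset.Ico (n - g) n, Kext K k) ^ g := by rw [hsplit]
    _ = (∏ k ∈ Finset.Ico (n - q) (n - g), Kext K k) ^ g *
          (∏ k ∈ Finset.Ico (n - g) n, Kext K k) ^ g := by rw [mul_pow]
    _ ≤ (a ^ (q - g)) ^ g * (∏ k ∈ Finset.Ico (n - g) n, Kext K k) ^ g :=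
        mul_le_mul_of_nonneg_right
          (pow_le_pow_left₀ (Finset.prod_nonneg fun k _ => le_of_lt (Kext_pos hK k)) hH _)
          (by positivity)
    _ = (a ^ g) ^ (q - g) * (∏ k ∈ Finset.Ico (n - g) n, Kext K k) ^ g := by
        rw [← pow_mul, ← pow_mul, Nat.mul_comm]
    _ ≤ (∏ k ∈ Finset.Ico (n - g) n, Kext K k) ^ (q - g) *
          (∏ k ∈ Finset.Ico (n - g) n, Kext K k) ^ g :=
        mul_le_mul_of_nonneg_right (pow_le_pow_left₀ (by positivity) hTa _) (by positivity)
    _ = (∏ k ∈ Finset.Ico (n - g) n, Kext K k) ^ q := by rw [← pow_add]; congr 1; omega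

lemma filter_low_eq (hn : 0 < n) (hgn : g ≤ n) :
    ∏ i ∈ Finset.univ.filter (fun i : Fin n => (i : ℕ) < g), K i
      = ∏ k ∈ Finset.range g, Kext K k := by
  refine Finset.prod_nbij' (fun i => (i : ℕ))
    (fun k => if h : k < n then (⟨k, h⟩ : Fin n) else ⟨0, hn⟩) ?_ ?_ ?_ ?_ ?_
  · intro i hi; simp at hi ⊢; exact hi
  · intro k hk
    simp only [Finset.mem_range] at hk
    have hkn : k < n := by omega
    simp only [dif_pos hkn, Finset.mem_filter, Finset.mem_univ, true_and]
    exact hk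
  · intro i hi
    simp only [Finset.mem_filter, Finset.mem_univ, true_and] at hi
    simp only [dif_pos i.2]
  · intro k hk
    simp only [Finset.mem_range] at hk
    have hkn : k < n := by omega
    simp only [dif_pos hkn]
  · intro i hi
    rw [Kext, dif_pos i.2]

lemma filter_top_eq (hn : 0 < n) (hgn : g ≤ n) :
    ∏ i ∈ Finset.univ.filter (fun i : Fin n => n - g ≤ (i : ℕ)), K i
      = ∏ k ∈ Finset.Ico (n - g) n, Kext K k := by
  refine Finset.prod_nbij' (fun i => (i : ℕ))
    (fun k => if h : k < n then (⟨k, h⟩ : Fin n) else ⟨0, hn⟩) ?_ ?_ ?_ ?_ ?_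
  · intro i hi
    simp only [Finset.mem_filter, Finset.mem_univ, true_and] at hi
    simp only [Finset.mem_Ico]
    exact ⟨hi, i.2⟩
  · intro k hk
    simp only [Finset.mem_Ico] at hk
    have hkn : k < n := hk.2
    simp only [dif_pos hkn, Finset.mem_filter, Finset.mem_univ, true_and]
    exact hk.1
  · intro i hi
    simp only [dif_pos i.2]
  · intro k hk
    simp only [Finset.mem_Ico] at hk
    simp only [dif_pos hk.2]
  · intro i hi
    rw [Kext, dif_pos i.2]

end SubsetProd

section Chain
variable {n : ℕ}

lemma cycle_pow_le (K : Fin n → ℝ) (σ : Fin n → Fin n) (y : Fin n → ℝ) (e : ℕ)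
    (r : ℝ) (hr : 0 ≤ r) (z : Fin n) (q : ℕ) (hq : 0 < q) (hper : σ^[q] z = z)
    (hpos : ∀ k : ℕ, 0 < y (σ^[k] z))
    (hrel : ∀ k : ℕ, r * y (σ^[k] z) ^ e ≤ K (σ^[k] z) * y (σ^[k + 1] z) ^ e) :
    r ^ q ≤ ∏ k ∈ Finset.range q, K (σ^[k] z) := by
  set f : ℕ → ℝ := fun k => y (σ^[k] z) ^ e with hf
  have hfpos : ∀ k, 0 < f k := fun k => pow_pos (hpos k) e
  have hmain : ∏ k ∈ Finset.range q, (r * f k) ≤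
      ∏ k ∈ Finset.range q, (K (σ^[k] z) * f (k + 1)) :=
    Finset.prod_le_prod (fun k _ => mul_nonneg hr (le_of_lt (hfpos k))) (fun k _ => hrel k)
  rw [Finset.prod_mul_distrib, Finset.prod_mul_distrib, Finset.prod_const,
    Finset.card_range] at hmain
  have hrot : ∏ k ∈ Finset.range q, f (k + 1) = ∏ k ∈ Finset.range q, f k :=
    prod_range_rotate f q (by rw [hf]; simp [hper]) (ne_of_gt (hfpos 0))
  rw [hrot] at hmain
  have hF : 0 < ∏ k ∈ Finset.range q, f k := Finset.prod_pos fun k _ => hfpos k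
  exact le_of_mul_le_mul_right hmain hF

lemma cycle_le_pow (K : Fin n → ℝ) (hK : ∀ i, 0 ≤ K i) (σ : Fin n → Fin n) (y : Fin n → ℝ)
    (e : ℕ) (r : ℝ) (z : Fin n) (q : ℕ) (hq : 0 < q) (hper : σ^[q] z = z)
    (hpos : ∀ k : ℕ, 0 < y (σ^[k] z))
    (hrel : ∀ k : ℕ, K (σ^[k] z) * y (σ^[k + 1] z) ^ e ≤ r * y (σ^[k] z) ^ e) :
    ∏ k ∈ Finset.range q, K (σ^[k] z) ≤ r ^ q := by
  set f : ℕ → ℝ := fun k => y (σ^[k] z) ^ e with hf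
  have hfpos : ∀ k, 0 < f k := fun k => pow_pos (hpos k) e
  have hmain : ∏ k ∈ Finset.range q, (K (σ^[k] z) * f (k + 1)) ≤
      ∏ k ∈ Finset.range q, (r * f k) :=
    Finset.prod_le_prod (fun k _ => mul_nonneg (hK _) (le_of_lt (hfpos _))) (fun k _ => hrel k)
  rw [Finset.prod_mul_distrib, Finset.prod_mul_distrib, Finset.prod_const,
    Finset.card_range] at hmain
  have hrot : ∏ k ∈ Finset.range q, f (k + 1) = ∏ k ∈ Finset.range q, f k :=
    prod_range_rotate f q (by rw [hf]; simp [hper]) (ne_of_gt (hfpos 0))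
  rw [hrot] at hmain
  have hF : 0 < ∏ k ∈ Finset.range q, f k := Finset.prod_pos fun k _ => hfpos k
  exact le_of_mul_le_mul_right hmain hF

end Chain

section Master
variable {m n : ℕ} {A : Fin n → (Fin (m - 1) → Fin n) → ℝ} {g : ℕ}

lemma Kpos (hA : ∀ i t, 0 ≤ A i t) (hirr : StronglyConnected (tArc m n A))
    {p : ℕ} {γ : ℕ → Fin n} (hγ : IsCircuit (tArc m n A) p γ) (i : Fin n) :
    0 < sliceSum m n A i :=
  sliceSum_pos hA (exists_out_arc hirr hγ i)

lemma master_upper (hm : 2 ≤ m) (hn : 0 < n) (hA : ∀ i t, 0 ≤ A i t)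
    (hirr : StronglyConnected (tArc m n A))
    (hmono : ∀ i j : Fin n, i ≤ j → sliceSum m n A i ≤ sliceSum m n A j)
    (hg : IsLeast {p : ℕ | ∃ γ : ℕ → Fin n, IsCircuit (tArc m n A) p γ} g)
    (y : Fin n → ℝ) (hy : ∀ i, 0 ≤ y i) (i0 : Fin n) (hi0 : 0 < y i0)
    (r : ℝ) (hr : 0 ≤ r) (hsub : ∀ i, r * y i ^ (m - 1) ≤ Ax m n A y i) :
    r ^ g ≤ ∏ i ∈ Finset.univ.filter (fun i : Fin n => n - g ≤ (i : ℕ)), sliceSum m n A i := by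
  classical
  obtain ⟨γ, hγ⟩ := hg.1
  set K := sliceSum m n A with hKdef
  have hK : ∀ i, 0 < K i := Kpos hA hirr hγ
  have hg1 : 1 ≤ g := hγ.1
  have he : m - 1 ≠ 0 := by omega
  have hPtop : 0 < ∏ i ∈ Finset.univ.filter (fun i : Fin n => n - g ≤ (i : ℕ)), K i :=
    Finset.prod_pos fun i _ => hK i
  by_cases hr0 : r = 0
  · subst hr0
    rw [zero_pow (by omega)]
    exact le_of_lt hPtop
  have hrpos : 0 < r := lt_of_le_of_ne hr (Ne.symm hr0)
  have houtarc := fun i => exists_out_arc hirr hγ i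
  have hN : ∀ i, ∃ s, tArc m n A i s ∧ ∀ j, tArc m n A i j → y j ≤ y s := by
    intro i
    obtain ⟨j0, hj0⟩ := houtarc i
    obtain ⟨s, hs, hmax⟩ := Finset.exists_max_image
      (Finset.univ.filter (fun j => tArc m n A i j)) y ⟨j0, by simpa using hj0⟩
    exact ⟨s, by simpa using hs, fun j hj => hmax j (by simpa using hj)⟩
  choose σ hσarc hσmax using hN
  have hrel : ∀ i, r * y i ^ (m - 1) ≤ K i * y (σ i) ^ (m - 1) :=
    fun i => le_trans (hsub i) (Ax_le hA hy (hσmax i))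
  have hposorb : ∀ k : ℕ, 0 < y (σ^[k] i0) := by
    intro k
    induction k with
    | zero => simpa
    | succ k ih =>
      rw [Function.iterate_succ_apply']
      set i := σ^[k] i0
      have h1 : 0 < r * y i ^ (m - 1) := mul_pos hrpos (pow_pos ih _)
      have h2 := lt_of_lt_of_le h1 (hrel i)
      by_contra hle
      push_neg at hle
      have h0 : y (σ i) = 0 := le_antisymm hle (hy _)
      rw [h0, zero_pow he, mul_zero] at h2
      exact lt_irrefl _ h2
  obtain ⟨s, q, hq0, hper, hinj⟩ := exists_periodic hn σ i0
  set z := σ^[s] i0 with hz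
  have hzpos : ∀ k : ℕ, 0 < y (σ^[k] z) := fun k => by
    rw [hz, ← Function.iterate_add_apply]; exact hposorb _
  have hrel' : ∀ k : ℕ, r * y (σ^[k] z) ^ (m - 1) ≤ K (σ^[k] z) * y (σ^[k + 1] z) ^ (m - 1) := by
    intro k
    have := hrel (σ^[k] z)
    rwa [← Function.iterate_succ_apply' σ k z] at this
  have hchain := cycle_pow_le K σ y (m - 1) r hr z q hq0 hper hzpos hrel'
  have hcirc : IsCircuit (tArc m n A) q (fun j => σ^[j] z) :=
    ⟨hq0, hper, fun j _ => by
      simp only [Function.iterate_succ_apply']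
      exact hσarc _⟩
  have hgq : g ≤ q := hg.2 ⟨_, hcirc⟩
  set S := Finset.image (fun k => σ^[k] z) (Finset.range q) with hS
  have hinj' : ∀ a ∈ Finset.range q, ∀ b ∈ Finset.range q,
      σ^[a] z = σ^[b] z → a = b := fun a ha b hb h =>
    hinj a b (Finset.mem_range.1 ha) (Finset.mem_range.1 hb) h
  have hcard : S.card = q := by
    rw [hS, Finset.card_image_of_injOn hinj', Finset.card_range]
  have hprodS : ∏ i ∈ S, K i = ∏ k ∈ Finset.range q, K (σ^[k] z) :=
    Finset.prod_image hinj'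
  have hqn : q ≤ n := by
    rw [← hcard]
    simpa using Finset.card_le_card (Finset.subset_univ S)
  have h2 : (r ^ q) ^ g ≤ (∏ i ∈ S, K i) ^ g :=
    pow_le_pow_left₀ (pow_nonneg hr q) (by rw [hprodS]; exact hchain) g
  have h3 : (∏ i ∈ S, K i) ^ g ≤ (∏ k ∈ Finset.Ico (n - q) n, Kext K k) ^ g :=
    pow_le_pow_left₀ (Finset.prod_nonneg fun i _ => le_of_lt (hK i))
      (prod_subset_le hK hmono hcard) g
  have h4 := pivot_top hK hmono hg1 hgq hqn
  have h5 : ∏ i ∈ Finset.univ.filter (fun i : Fin n => n - g ≤ (i : ℕ)), K i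
      = ∏ k ∈ Finset.Ico (n - g) n, Kext K k := filter_top_eq hn (le_trans hgq hqn)
  have hfinal : (r ^ g) ^ q ≤
      (∏ i ∈ Finset.univ.filter (fun i : Fin n => n - g ≤ (i : ℕ)), K i) ^ q := by
    calc (r ^ g) ^ q = (r ^ q) ^ g := by rw [← pow_mul, ← pow_mul, Nat.mul_comm]
      _ ≤ (∏ i ∈ S, K i) ^ g := h2
      _ ≤ (∏ k ∈ Finset.Ico (n - q) n, Kext K k) ^ g := h3
      _ ≤ (∏ k ∈ Finset.Ico (n - g) n, Kext K k) ^ q := h4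
      _ = _ := by rw [h5]
  exact (pow_le_pow_iff_left₀ (pow_nonneg hr g) (le_of_lt hPtop) (by omega)).1 hfinal

lemma master_lower (hm : 2 ≤ m) (hn : 0 < n) (hA : ∀ i t, 0 ≤ A i t)
    (hirr : StronglyConnected (tArc m n A))
    (hmono : ∀ i j : Fin n, i ≤ j → sliceSum m n A i ≤ sliceSum m n A j)
    (hg : IsLeast {p : ℕ | ∃ γ : ℕ → Fin n, IsCircuit (tArc m n A) p γ} g)
    (x : Fin n → ℝ) (hx : ∀ i, 0 < x i)
    (r : ℝ) (hsuper : ∀ i, Ax m n A x i ≤ r * x i ^ (m - 1)) :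
    (∏ i ∈ Finset.univ.filter (fun i : Fin n => (i : ℕ) < g), sliceSum m n A i) ≤ r ^ g := by
  classical
  obtain ⟨γ, hγ⟩ := hg.1
  set K := sliceSum m n A with hKdef
  have hK : ∀ i, 0 < K i := Kpos hA hirr hγ
  have hg1 : 1 ≤ g := hγ.1
  have hx' : ∀ i, 0 ≤ x i := fun i => le_of_lt (hx i)
  have houtarc := fun i => exists_out_arc hirr hγ i
  have hN : ∀ i, ∃ s, tArc m n A i s ∧ ∀ j, tArc m n A i j → x s ≤ x j := by
    intro i
    obtain ⟨j0, hj0⟩ := houtarc i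
    obtain ⟨s, hs, hmin⟩ := Finset.exists_min_image
      (Finset.univ.filter (fun j => tArc m n A i j)) x ⟨j0, by simpa using hj0⟩
    exact ⟨s, by simpa using hs, fun j hj => hmin j (by simpa using hj)⟩
  choose σ hσarc hσmin using hN
  have hrel : ∀ i, K i * x (σ i) ^ (m - 1) ≤ r * x i ^ (m - 1) :=
    fun i => le_trans (Ax_ge hA hx' (hσmin i)) (hsuper i)
  set i0 : Fin n := ⟨0, hn⟩ with hi0
  have hrpos : 0 < r := by
    have h1 : 0 < K i0 * x (σ i0) ^ (m - 1) := mul_pos (hK i0) (pow_pos (hx _) _)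
    have h2 := lt_of_lt_of_le h1 (hrel i0)
    nlinarith [pow_pos (hx i0) (m - 1)]
  obtain ⟨s, q, hq0, hper, hinj⟩ := exists_periodic hn σ i0
  set z := σ^[s] i0 with hz
  have hzpos : ∀ k : ℕ, 0 < x (σ^[k] z) := fun k => hx _
  have hrel' : ∀ k : ℕ, K (σ^[k] z) * x (σ^[k + 1] z) ^ (m - 1)
      ≤ r * x (σ^[k] z) ^ (m - 1) := by
    intro k
    have := hrel (σ^[k] z)
    rwa [← Function.iterate_succ_apply' σ k z] at this
  have hchain := cycle_le_pow K (fun i => le_of_lt (hK i)) σ x (m - 1) r z q hq0 hper hzpos hrel'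
  have hcirc : IsCircuit (tArc m n A) q (fun j => σ^[j] z) :=
    ⟨hq0, hper, fun j _ => by
      simp only [Function.iterate_succ_apply']
      exact hσarc _⟩
  have hgq : g ≤ q := hg.2 ⟨_, hcirc⟩
  set S := Finset.image (fun k => σ^[k] z) (Finset.range q) with hS
  have hinj' : ∀ a ∈ Finset.range q, ∀ b ∈ Finset.range q,
      σ^[a] z = σ^[b] z → a = b := fun a ha b hb h =>
    hinj a b (Finset.mem_range.1 ha) (Finset.mem_range.1 hb) h
  have hcard : S.card = q := by
    rw [hS, Finset.card_image_of_injOn hinj', Finset.card_range]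
  have hprodS : ∏ i ∈ S, K i = ∏ k ∈ Finset.range q, K (σ^[k] z) :=
    Finset.prod_image hinj'
  have hqn : q ≤ n := by
    rw [← hcard]
    simpa using Finset.card_le_card (Finset.subset_univ S)
  have h5 : ∏ i ∈ Finset.univ.filter (fun i : Fin n => (i : ℕ) < g), K i
      = ∏ k ∈ Finset.range g, Kext K k := filter_low_eq hn (le_trans hgq hqn)
  have hPlow : 0 ≤ ∏ i ∈ Finset.univ.filter (fun i : Fin n => (i : ℕ) < g), K i :=
    Finset.prod_nonneg fun i _ => le_of_lt (hK i)
  have hfinal : (∏ i ∈ Finset.univ.filter (fun i : Fin n => (i : ℕ) < g), K i) ^ q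
      ≤ (r ^ g) ^ q := by
    calc (∏ i ∈ Finset.univ.filter (fun i : Fin n => (i : ℕ) < g), K i) ^ q
        = (∏ k ∈ Finset.range g, Kext K k) ^ q := by rw [h5]
      _ ≤ (∏ k ∈ Finset.range q, Kext K k) ^ g := pivot_low hK hmono hg1 hgq hqn
      _ ≤ (∏ i ∈ S, K i) ^ g :=
          pow_le_pow_left₀ (Finset.prod_nonneg fun k _ => le_of_lt (Kext_pos hK k))
            (prod_subset_ge hK hmono hcard) g
      _ ≤ (r ^ q) ^ g := pow_le_pow_left₀ (Finset.prod_nonneg fun i _ => le_of_lt (hK i))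
            (by rw [hprodS]; exact hchain) g
      _ = (r ^ g) ^ q := by rw [← pow_mul, ← pow_mul, Nat.mul_comm]
  exact (pow_le_pow_iff_left₀ hPlow (pow_nonneg (le_of_lt hrpos) g) (by omega)).1 hfinal

end Master

section Existence
variable {m n : ℕ}

lemma pow_add_lb {u ε : ℝ} (hu : 0 ≤ u) (hε : 0 ≤ ε) {e : ℕ} (he : 1 ≤ e) :
    u ^ e + ε * u ^ (e - 1) ≤ (u + ε) ^ e := by
  have h1 : u ^ (e - 1) ≤ (u + ε) ^ (e - 1) := pow_le_pow_left₀ hu (by linarith) _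
  have h2 : (u + ε) ^ e = (u + ε) ^ (e - 1) * (u + ε) := by
    conv_lhs => rw [show e = (e - 1) + 1 by omega]
    rw [pow_succ]
  have h3 : u ^ e = u ^ (e - 1) * u := by
    conv_lhs => rw [show e = (e - 1) + 1 by omega]
    rw [pow_succ]
  have h4 : 0 ≤ u ^ (e - 1) := pow_nonneg hu _
  nlinarith

lemma Ax_continuous (A : Fin n → (Fin (m - 1) → Fin n) → ℝ) (i : Fin n) :
    Continuous fun x : Fin n → ℝ => Ax m n A x i := by
  refine continuous_finset_sum _ fun t _ => Continuous.mul continuous_const ?_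
  exact continuous_finset_prod _ fun j _ => continuous_apply (t j)

lemma Ax_add_const (A : Fin n → (Fin (m - 1) → Fin n) → ℝ) (c : ℝ) (x : Fin n → ℝ) (i : Fin n) :
    Ax m n (fun i t => A i t + c) x i
      = Ax m n A x i + c * ∑ t : Fin (m - 1) → Fin n, ∏ j, x (t j) := by
  rw [Ax, Ax, Finset.mul_sum, ← Finset.sum_add_distrib]
  exact Finset.sum_congr rfl fun t _ => by ring

lemma r_le_sum (hn : 0 < n) {B : Fin n → (Fin (m - 1) → Fin n) → ℝ}
    (hB : ∀ i t, 0 ≤ B i t) {x : Fin n → ℝ} (hx : ∀ i, 0 ≤ x i) (hsum : ∑ i, x i = 1)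
    {r : ℝ} (hsub : ∀ i, r * x i ^ (m - 1) ≤ Ax m n B x i) :
    r ≤ ∑ i, sliceSum m n B i := by
  obtain ⟨iM, -, hmax⟩ := Finset.exists_max_image Finset.univ x ⟨⟨0, hn⟩, Finset.mem_univ _⟩
  have hM : 0 < x iM := by
    by_contra h
    push_neg at h
    have : ∑ i, x i ≤ 0 := Finset.sum_nonpos fun i _ =>
      le_trans (hmax i (Finset.mem_univ i)) h
    linarith
  have h1 : r * x iM ^ (m - 1) ≤ sliceSum m n B iM * x iM ^ (m - 1) :=
    le_trans (hsub iM) (Ax_le hB hx (fun j _ => hmax j (Finset.mem_univ j)))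
  have h2 : r ≤ sliceSum m n B iM := le_of_mul_le_mul_right h1 (pow_pos hM _)
  exact le_trans h2 (Finset.single_le_sum (fun i _ => sliceSum_nonneg hB i) (Finset.mem_univ iM))

lemma exists_eig_positive_tensor (hm : 2 ≤ m) (hn : 0 < n)
    (B : Fin n → (Fin (m - 1) → Fin n) → ℝ) (hB : ∀ i t, 0 < B i t) :
    ∃ (r : ℝ) (x : Fin n → ℝ), 0 ≤ r ∧ (∀ i, 0 < x i) ∧ (∑ i, x i = 1) ∧
      ∀ i, Ax m n B x i = r * x i ^ (m - 1) := by
  classical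
  have hB' : ∀ i t, 0 ≤ B i t := fun i t => le_of_lt (hB i t)
  have he : 1 ≤ m - 1 := by omega
  have he0 : m - 1 ≠ 0 := by omega
  set Φ : Set (ℝ × (Fin n → ℝ)) := {p | 0 ≤ p.1 ∧ (∀ i, 0 ≤ p.2 i) ∧ (∑ i, p.2 i) = 1 ∧
    ∀ i, p.1 * p.2 i ^ (m - 1) ≤ Ax m n B p.2 i} with hΦ
  -- scale invariance
  have scale_mem : ∀ (r : ℝ) (y : Fin n → ℝ), 0 ≤ r → (∀ i, 0 ≤ y i) → 0 < ∑ i, y i →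
      (∀ i, r * y i ^ (m - 1) ≤ Ax m n B y i) →
      ((r, fun i => (∑ j, y j)⁻¹ * y i) : ℝ × (Fin n → ℝ)) ∈ Φ := by
    intro r y hr hy hsum hsub
    have hc : 0 < (∑ j, y j)⁻¹ := inv_pos.2 hsum
    refine ⟨hr, fun i => mul_nonneg (le_of_lt hc) (hy i), ?_, fun i => ?_⟩
    · rw [← Finset.mul_sum]
      exact inv_mul_cancel₀ (ne_of_gt hsum)
    · rw [Ax_smul]
      calc r * ((∑ j, y j)⁻¹ * y i) ^ (m - 1)
          = (∑ j, y j)⁻¹ ^ (m - 1) * (r * y i ^ (m - 1)) := by ring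
        _ ≤ (∑ j, y j)⁻¹ ^ (m - 1) * Ax m n B y i :=
            mul_le_mul_of_nonneg_left (hsub i) (by positivity)
  -- closedness
  have hclosed : IsClosed Φ := by
    have h1 : IsClosed {p : ℝ × (Fin n → ℝ) | 0 ≤ p.1} :=
      isClosed_le continuous_const continuous_fst
    have h2 : IsClosed {p : ℝ × (Fin n → ℝ) | ∀ i, 0 ≤ p.2 i} := by
      have : {p : ℝ × (Fin n → ℝ) | ∀ i, 0 ≤ p.2 i}
          = ⋂ i, {p : ℝ × (Fin n → ℝ) | 0 ≤ p.2 i} := by ext p; simp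
      rw [this]
      exact isClosed_iInter fun i =>
        isClosed_le continuous_const ((continuous_apply i).comp continuous_snd)
    have h3 : IsClosed {p : ℝ × (Fin n → ℝ) | (∑ i, p.2 i) = 1} := by
      refine isClosed_eq ?_ continuous_const
      exact continuous_finset_sum _ fun i _ => (continuous_apply i).comp continuous_snd
    have h4 : IsClosed {p : ℝ × (Fin n → ℝ) |
        ∀ i, p.1 * p.2 i ^ (m - 1) ≤ Ax m n B p.2 i} := by
      have : {p : ℝ × (Fin n → ℝ) | ∀ i, p.1 * p.2 i ^ (m - 1) ≤ Ax m n B p.2 i}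
          = ⋂ i, {p : ℝ × (Fin n → ℝ) | p.1 * p.2 i ^ (m - 1) ≤ Ax m n B p.2 i} := by
        ext p; simp
      rw [this]
      refine isClosed_iInter fun i => isClosed_le ?_ ((Ax_continuous B i).comp continuous_snd)
      exact continuous_fst.mul (((continuous_apply i).comp continuous_snd).pow _)
    have : Φ = ({p : ℝ × (Fin n → ℝ) | 0 ≤ p.1} ∩ {p | ∀ i, 0 ≤ p.2 i})
        ∩ ({p : ℝ × (Fin n → ℝ) | (∑ i, p.2 i) = 1}
          ∩ {p | ∀ i, p.1 * p.2 i ^ (m - 1) ≤ Ax m n B p.2 i}) := by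
      ext p
      simp only [hΦ, Set.mem_setOf_eq, Set.mem_inter_iff]
      tauto
    rw [this]
    exact ((h1.inter h2).inter (h3.inter h4))
  -- boundedness
  set C : ℝ := ∑ i, sliceSum m n B i with hC
  have hsubset : Φ ⊆ Set.Icc (0 : ℝ) C ×ˢ Set.Icc (0 : Fin n → ℝ) 1 := by
    rintro ⟨r, x⟩ ⟨hr, hx, hsum, hsub⟩
    constructor
    · exact ⟨hr, r_le_sum hn hB' hx hsum hsub⟩
    · constructor
      · intro i; exact hx i
      · intro i
        calc x i ≤ ∑ j, x j := Finset.single_le_sum (fun j _ => hx j) (Finset.mem_univ i)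
          _ = 1 := hsum
  have hcompact : IsCompact Φ :=
    IsCompact.of_isClosed_subset (isCompact_Icc.prod isCompact_Icc) hclosed hsubset
  -- nonempty
  have hne : ((0 : ℝ), fun _ : Fin n => (n : ℝ)⁻¹) ∈ Φ := by
    refine ⟨le_refl 0, fun i => by positivity, ?_, fun i => ?_⟩
    · rw [Finset.sum_const, Finset.card_univ, Fintype.card_fin, nsmul_eq_mul]
      exact mul_inv_cancel₀ (by positivity)
    · rw [zero_mul]
      exact Ax_nonneg hB' (fun i => by positivity) i
  obtain ⟨⟨r, x⟩, hpΦ, hpmax⟩ := hcompact.exists_isMaxOn ⟨_, hne⟩ continuous_fst.continuousOn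
  obtain ⟨hr, hx, hsum, hsub⟩ := hpΦ
  dsimp only at hr hx hsum hsub
  have hmax : ∀ p ∈ Φ, p.1 ≤ r := fun p hp => hpmax hp
  have hx1 : ∀ i, x i ≤ 1 := fun i => by
    calc x i ≤ ∑ j, x j := Finset.single_le_sum (fun j _ => hx j) (Finset.mem_univ i)
      _ = 1 := hsum
  obtain ⟨iM, -, hmaxx⟩ := Finset.exists_max_image Finset.univ x ⟨⟨0, hn⟩, Finset.mem_univ _⟩
  have hM : 0 < x iM := by
    by_contra h
    push_neg at h
    have : ∑ i, x i ≤ 0 := Finset.sum_nonpos fun i _ =>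
      le_trans (hmaxx i (Finset.mem_univ i)) h
    linarith
  -- Claim (a): x is positive
  have hxpos : ∀ i, 0 < x i := by
    by_contra h
    push_neg at h
    obtain ⟨iz, hiz⟩ := h
    have hxz : x iz = 0 := le_antisymm hiz (hx iz)
    set tz : Fin (m - 1) → Fin n := fun _ => iz with htz
    set tM : Fin (m - 1) → Fin n := fun _ => iM with htM
    obtain ⟨ia, -, ha⟩ := Finset.exists_min_image Finset.univ (fun i => B i tz)
      ⟨⟨0, hn⟩, Finset.mem_univ _⟩
    set a : ℝ := B ia tz with haa
    have hapos : 0 < a := hB _ _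
    obtain ⟨ib, -, hb⟩ := Finset.exists_min_image Finset.univ (fun i => B i tM)
      ⟨⟨0, hn⟩, Finset.mem_univ _⟩
    set b : ℝ := B ib tM with hbb
    have hbpos : 0 < b := hB _ _
    have hAxlow : ∀ i, b * x iM ^ (m - 1) ≤ Ax m n B x i := by
      intro i
      have h1 : B i tM * ∏ j, x (tM j) ≤ Ax m n B x i :=
        Finset.single_le_sum
          (f := fun t => B i t * ∏ j, x (t j))
          (fun t _ => mul_nonneg (hB' i t) (Finset.prod_nonneg fun j _ => hx _))
          (Finset.mem_univ tM)
      have h2 : ∏ j, x (tM j) = x iM ^ (m - 1) := by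
        rw [htM]; simp
      rw [h2] at h1
      exact le_trans (mul_le_mul_of_nonneg_right (hb i (Finset.mem_univ i))
        (pow_nonneg (hx _) _)) h1
    set β : ℝ := b * x iM ^ (m - 1) with hβ
    have hβpos : 0 < β := mul_pos hbpos (pow_pos hM _)
    set ε : ℝ := min 1 (β / (r + a)) with hε
    have hra : 0 < r + a := by linarith
    have hεpos : 0 < ε := lt_min one_pos (by positivity)
    have hε1 : ε ≤ 1 := min_le_left _ _
    have hεβ : (r + a) * ε ≤ β := by
      calc (r + a) * ε ≤ (r + a) * (β / (r + a)) :=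
            mul_le_mul_of_nonneg_left (min_le_right _ _) (le_of_lt hra)
        _ = β := by field_simp
    set y : Fin n → ℝ := fun i => if x i = 0 then ε else x i with hy
    have hxy : ∀ i, x i ≤ y i := by
      intro i
      rw [hy]
      by_cases h0 : x i = 0
      · simp [h0]; linarith
      · simp [h0]
    have hy0 : ∀ i, 0 ≤ y i := fun i => le_trans (hx i) (hxy i)
    set δ : ℝ := a * ε ^ (m - 1) with hδ
    have hδpos : 0 < δ := mul_pos hapos (pow_pos hεpos _)
    have hsuby : ∀ i, (r + δ) * y i ^ (m - 1) ≤ Ax m n B y i := by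
      intro i
      by_cases h0 : x i = 0
      · have hyi : y i = ε := by rw [hy]; simp [h0]
        have h1 : β ≤ Ax m n B y i :=
          le_trans (hAxlow i) (Ax_mono_vec hB' hx hxy i)
        have hεe : ε ^ (m - 1) ≤ ε := pow_le_of_le_one (le_of_lt hεpos) hε1 he0
        have hεe1 : ε ^ (m - 1) ≤ 1 := pow_le_one₀ (le_of_lt hεpos) hε1
        have h2 : (r + δ) * ε ^ (m - 1) ≤ (r + a) * ε := by
          have hδa : δ ≤ a := by
            rw [hδ]
            nlinarith
          nlinarith
        rw [hyi]
        linarith [hεβ]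
      · have hyi : y i = x i := by rw [hy]; simp [h0]
        have hgain := Ax_gain hB' hx hxy i tz
        have h2 : ∏ j, y (tz j) = ε ^ (m - 1) := by
          have : y iz = ε := by rw [hy]; simp [hxz]
          rw [htz]; simp [this]
        have h3 : ∏ j, x (tz j) = 0 := by
          calc ∏ j, x (tz j) = x iz ^ (m - 1) := by rw [htz]; simp
            _ = 0 := by rw [hxz]; exact zero_pow he0
        rw [h2, h3, sub_zero] at hgain
        have h4 : a * ε ^ (m - 1) ≤ B i tz * ε ^ (m - 1) :=
          mul_le_mul_of_nonneg_right (ha i (Finset.mem_univ i)) (pow_nonneg (le_of_lt hεpos) _)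
        have h5 : δ * x i ^ (m - 1) ≤ δ := by
          have : x i ^ (m - 1) ≤ 1 := pow_le_one₀ (hx i) (hx1 i)
          nlinarith
        have h6 := hsub i
        rw [hyi]
        nlinarith
    have hsumy : 0 < ∑ i, y i := by
      have : (1 : ℝ) ≤ ∑ i, y i := by
        rw [← hsum]
        exact Finset.sum_le_sum fun i _ => hxy i
      linarith
    have hmem := scale_mem (r + δ) y (by linarith) hy0 hsumy hsuby
    have := hmax _ hmem
    simp only at this
    linarith
  -- Claim (b): eigen equality
  have heigen : ∀ i, Ax m n B x i = r * x i ^ (m - 1) := by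
    by_contra h
    push_neg at h
    obtain ⟨i1, hi1⟩ := h
    have hstrict : r * x i1 ^ (m - 1) < Ax m n B x i1 :=
      lt_of_le_of_ne (hsub i1) (Ne.symm hi1)
    set t1 : Fin (m - 1) → Fin n := fun _ => i1 with ht1
    obtain ⟨ia, -, ha⟩ := Finset.exists_min_image Finset.univ (fun i => B i t1)
      ⟨⟨0, hn⟩, Finset.mem_univ _⟩
    set a : ℝ := B ia t1 with haa
    have hapos : 0 < a := hB _ _
    set c : ℝ := Ax m n B x i1 with hc
    set f : ℝ → ℝ := fun ε => (r + a * ε * x i1 ^ (m - 1 - 1)) * (x i1 + ε) ^ (m - 1) with hf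
    have hcont : Continuous f := by
      refine Continuous.mul ?_ ?_
      · exact continuous_const.add ((continuous_const.mul continuous_id).mul continuous_const)
      · exact (continuous_const.add continuous_id).pow _
    have hf0 : f 0 = r * x i1 ^ (m - 1) := by
      rw [hf]; simp
    have hev : ∀ᶠ ε in nhdsWithin 0 (Set.Ioi (0 : ℝ)), f ε < c := by
      refine Filter.Eventually.filter_mono nhdsWithin_le_nhds ?_
      refine Filter.Tendsto.eventually_lt_const ?_ hcont.continuousAt
      rw [hf0]; exact hstrict
    obtain ⟨ε, hfε, hεpos⟩ := (hev.and (eventually_mem_nhdsWithin)).exists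
    rw [Set.mem_Ioi] at hεpos
    set y : Fin n → ℝ := fun i => if i = i1 then x i1 + ε else x i with hy
    have hxy : ∀ i, x i ≤ y i := by
      intro i
      rw [hy]
      by_cases h0 : i = i1
      · subst h0; simp; linarith
      · simp [h0]
    have hy0 : ∀ i, 0 ≤ y i := fun i => le_trans (le_of_lt (hxpos i)) (hxy i)
    set δ : ℝ := a * ε * x i1 ^ (m - 1 - 1) with hδ
    have hδpos : 0 < δ := by
      have := pow_pos (hxpos i1) (m - 1 - 1)
      positivity
    have hprody : ∏ j, y (t1 j) = (x i1 + ε) ^ (m - 1) := by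
      have : y i1 = x i1 + ε := by rw [hy]; simp
      rw [ht1]; simp [this]
    have hprodx : ∏ j, x (t1 j) = x i1 ^ (m - 1) := by
      rw [ht1]; simp
    have hsuby : ∀ i, (r + δ) * y i ^ (m - 1) ≤ Ax m n B y i := by
      intro i
      by_cases h0 : i = i1
      · rw [h0]
        have hyi : y i1 = x i1 + ε := by rw [hy]; simp
        have h1 : Ax m n B x i1 ≤ Ax m n B y i1 :=
          Ax_mono_vec hB' (fun j => le_of_lt (hxpos j)) hxy i1
        rw [hyi]
        refine le_of_lt ?_
        calc (r + δ) * (x i1 + ε) ^ (m - 1) = f ε := by rw [hf, hδ]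
          _ < c := hfε
          _ ≤ Ax m n B y i1 := h1
      · have hyi : y i = x i := by rw [hy]; simp [h0]
        have hgain := Ax_gain hB' (fun j => le_of_lt (hxpos j)) hxy i t1
        rw [hprody, hprodx] at hgain
        have hlb : x i1 ^ (m - 1) + ε * x i1 ^ (m - 1 - 1) ≤ (x i1 + ε) ^ (m - 1) :=
          pow_add_lb (le_of_lt (hxpos i1)) (le_of_lt hεpos) he
        have h4 : a * ((x i1 + ε) ^ (m - 1) - x i1 ^ (m - 1))
            ≤ B i t1 * ((x i1 + ε) ^ (m - 1) - x i1 ^ (m - 1)) := by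
          refine mul_le_mul_of_nonneg_right (ha i (Finset.mem_univ i)) ?_
          nlinarith [pow_pos (hxpos i1) (m - 1 - 1)]
        have h5 : δ * x i ^ (m - 1) ≤ δ := by
          have : x i ^ (m - 1) ≤ 1 := pow_le_one₀ (le_of_lt (hxpos i)) (hx1 i)
          nlinarith
        have h6 := hsub i
        have h7 : δ ≤ a * ((x i1 + ε) ^ (m - 1) - x i1 ^ (m - 1)) := by
          rw [hδ]
          nlinarith
        rw [hyi]
        nlinarith
    have hsumy : 0 < ∑ i, y i := by
      have : (1 : ℝ) ≤ ∑ i, y i := by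
        rw [← hsum]
        exact Finset.sum_le_sum fun i _ => hxy i
      linarith
    have hmem := scale_mem (r + δ) y (by linarith) hy0 hsumy hsuby
    have := hmax _ hmem
    simp only at this
    linarith
  exact ⟨r, x, hr, hxpos, hsum, heigen⟩

end Existence

section Limit
variable {m n : ℕ} {A : Fin n → (Fin (m - 1) → Fin n) → ℝ} {g : ℕ}

lemma exists_good_eigpair (hm : 2 ≤ m) (hn : 0 < n) (hA : ∀ i t, 0 ≤ A i t)
    (hirr : StronglyConnected (tArc m n A))
    (hmono : ∀ i j : Fin n, i ≤ j → sliceSum m n A i ≤ sliceSum m n A j)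
    (hg : IsLeast {p : ℕ | ∃ γ : ℕ → Fin n, IsCircuit (tArc m n A) p γ} g) :
    ∃ (r : ℝ) (x : Fin n → ℝ), 0 ≤ r ∧ (∀ i, 0 ≤ x i) ∧ (∑ i, x i = 1) ∧
      (∀ i, Ax m n A x i = r * x i ^ (m - 1)) ∧
      (∏ i ∈ Finset.univ.filter (fun i : Fin n => (i : ℕ) < g), sliceSum m n A i) ≤ r ^ g := by
  classical
  set B : ℕ → Fin n → (Fin (m - 1) → Fin n) → ℝ :=
    fun k i t => A i t + 1 / ((k : ℝ) + 1) with hBdef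
  have hBpos : ∀ k i t, 0 < B k i t := fun k i t =>
    add_pos_of_nonneg_of_pos (hA i t) (by positivity)
  have hex := fun k => exists_eig_positive_tensor hm hn (B k) (hBpos k)
  choose r x hr hxpos hxsum heig using hex
  have hAB : ∀ k i t, A i t ≤ B k i t := fun k i t =>
    le_add_of_nonneg_right (by positivity)
  -- lower bound for every k
  have hlow : ∀ k, (∏ i ∈ Finset.univ.filter (fun i : Fin n => (i : ℕ) < g),
      sliceSum m n A i) ≤ r k ^ g := by
    intro k
    refine master_lower hm hn hA hirr hmono hg (x k) (hxpos k) (r k) fun i => ?_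
    calc Ax m n A (x k) i ≤ Ax m n (B k) (x k) i :=
          Ax_mono_tensor (hAB k) (fun j => le_of_lt (hxpos k j)) i
      _ = r k * x k i ^ (m - 1) := heig k i
  -- uniform upper bound for r k
  set C : ℝ := (∑ i, sliceSum m n A i) + (n : ℝ) * (n : ℝ) ^ (m - 1) with hC
  have hsliceB : ∀ k i, sliceSum m n (B k) i
      = sliceSum m n A i + ((n : ℝ) ^ (m - 1)) * (1 / ((k : ℝ) + 1)) := by
    intro k i
    rw [sliceSum, sliceSum, hBdef, Finset.sum_add_distrib, Finset.sum_const, Finset.card_univ]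
    rw [Fintype.card_fun, Fintype.card_fin, Fintype.card_fin, nsmul_eq_mul]
    push_cast
    ring
  have hrC : ∀ k, r k ≤ C := by
    intro k
    have h1 : r k ≤ ∑ i, sliceSum m n (B k) i :=
      r_le_sum hn (fun i t => le_of_lt (hBpos k i t)) (fun i => le_of_lt (hxpos k i))
        (hxsum k) (fun i => le_of_eq (heig k i).symm)
    have h2 : ∑ i, sliceSum m n (B k) i ≤ C := by
      rw [hC]
      have : ∀ i : Fin n, sliceSum m n (B k) i ≤ sliceSum m n A i + (n : ℝ) ^ (m - 1) := by
        intro i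
        rw [hsliceB k i]
        have hc1 : 1 / ((k : ℝ) + 1) ≤ 1 := by
          rw [div_le_one (by positivity)]
          have : (0 : ℝ) ≤ (k : ℝ) := Nat.cast_nonneg k
          linarith
        have : ((n : ℝ) ^ (m - 1)) * (1 / ((k : ℝ) + 1)) ≤ ((n : ℝ) ^ (m - 1)) * 1 :=
          mul_le_mul_of_nonneg_left hc1 (by positivity)
        linarith
      calc ∑ i, sliceSum m n (B k) i
          ≤ ∑ i : Fin n, (sliceSum m n A i + (n : ℝ) ^ (m - 1)) :=
            Finset.sum_le_sum fun i _ => this i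
        _ = (∑ i, sliceSum m n A i) + (n : ℝ) * (n : ℝ) ^ (m - 1) := by
            rw [Finset.sum_add_distrib, Finset.sum_const, Finset.card_univ, Fintype.card_fin,
              nsmul_eq_mul]
    linarith
  -- compact region and subsequence
  have hΩc : IsCompact (Set.Icc (0 : ℝ) C ×ˢ Set.Icc (0 : Fin n → ℝ) 1) :=
    isCompact_Icc.prod isCompact_Icc
  have hmem : ∀ k, ((r k, x k) : ℝ × (Fin n → ℝ))
      ∈ Set.Icc (0 : ℝ) C ×ˢ Set.Icc (0 : Fin n → ℝ) 1 := by
    intro k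
    refine ⟨⟨hr k, hrC k⟩, fun i => le_of_lt (hxpos k i), fun i => ?_⟩
    calc x k i ≤ ∑ j, x k j :=
          Finset.single_le_sum (fun j _ => le_of_lt (hxpos k j)) (Finset.mem_univ i)
      _ = 1 := hxsum k
  obtain ⟨⟨rL, xL⟩, hΩmem, φ, hφ, htend⟩ := hΩc.tendsto_subseq hmem
  have htr : Filter.Tendsto (fun k => r (φ k)) Filter.atTop (nhds rL) :=
    (continuous_fst.tendsto _).comp htend
  have htx : Filter.Tendsto (fun k => x (φ k)) Filter.atTop (nhds xL) :=
    (continuous_snd.tendsto _).comp htend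
  have hrL : 0 ≤ rL := hΩmem.1.1
  have hxL0 : ∀ i, 0 ≤ xL i := fun i => hΩmem.2.1 i
  have hsumL : ∑ i, xL i = 1 := by
    have hcs : Continuous fun v : Fin n → ℝ => ∑ i, v i :=
      continuous_finset_sum _ fun i _ => continuous_apply i
    have h1 : Filter.Tendsto (fun k => ∑ i, x (φ k) i) Filter.atTop (nhds (∑ i, xL i)) :=
      (hcs.tendsto _).comp htx
    have h2 : (fun k => ∑ i, x (φ k) i) = fun _ => (1 : ℝ) := funext fun k => hxsum (φ k)
    rw [h2] at h1
    exact (tendsto_nhds_unique h1 tendsto_const_nhds)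
  have heigL : ∀ i, Ax m n A xL i = rL * xL i ^ (m - 1) := by
    intro i
    set S : (Fin n → ℝ) → ℝ := fun v => ∑ t : Fin (m - 1) → Fin n, ∏ j, v (t j) with hS
    have hScont : Continuous S :=
      continuous_finset_sum _ fun t _ => continuous_finset_prod _ fun j _ => continuous_apply _
    have hc0 : Filter.Tendsto (fun k => 1 / ((φ k : ℝ) + 1)) Filter.atTop (nhds 0) :=
      tendsto_one_div_add_atTop_nhds_zero_nat.comp hφ.tendsto_atTop
    have hL : Filter.Tendsto
        (fun k => Ax m n A (x (φ k)) i + (1 / ((φ k : ℝ) + 1)) * S (x (φ k)))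
        Filter.atTop (nhds (Ax m n A xL i + 0 * S xL)) :=
      Filter.Tendsto.add (((Ax_continuous A i).tendsto _).comp htx)
        (Filter.Tendsto.mul hc0 ((hScont.tendsto _).comp htx))
    have hR : Filter.Tendsto (fun k => r (φ k) * x (φ k) i ^ (m - 1))
        Filter.atTop (nhds (rL * xL i ^ (m - 1))) :=
      Filter.Tendsto.mul htr
        (Filter.Tendsto.pow (((continuous_apply i).tendsto _).comp htx) _)
    have hEq : (fun k => Ax m n A (x (φ k)) i + (1 / ((φ k : ℝ) + 1)) * S (x (φ k)))
        = fun k => r (φ k) * x (φ k) i ^ (m - 1) := by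
      funext k
      rw [← heig (φ k) i, hBdef, ← Ax_add_const]
    rw [hEq] at hL
    have := tendsto_nhds_unique hL hR
    rw [zero_mul, add_zero] at this
    exact this
  have hlowL : (∏ i ∈ Finset.univ.filter (fun i : Fin n => (i : ℕ) < g),
      sliceSum m n A i) ≤ rL ^ g :=
    ge_of_tendsto (Filter.Tendsto.pow htr g)
      (Filter.Eventually.of_forall fun k => hlow (φ k))
  exact ⟨rL, xL, hrL, hxL0, hsumL, heigL, hlowL⟩

end Limit

section Final
variable {m n : ℕ} {A : Fin n → (Fin (m - 1) → Fin n) → ℝ} {g : ℕ}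

lemma eig_abs_pow_le (hm : 2 ≤ m) (hn : 0 < n) (hA : ∀ i t, 0 ≤ A i t)
    (hirr : StronglyConnected (tArc m n A))
    (hmono : ∀ i j : Fin n, i ≤ j → sliceSum m n A i ≤ sliceSum m n A j)
    (hg : IsLeast {p : ℕ | ∃ γ : ℕ → Fin n, IsCircuit (tArc m n A) p γ} g)
    {lam : ℂ} (hlam : IsEig m n A lam) :
    ‖lam‖ ^ g
      ≤ ∏ i ∈ Finset.univ.filter (fun i : Fin n => n - g ≤ (i : ℕ)), sliceSum m n A i := by
  obtain ⟨x, hx0, heq⟩ := hlam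
  set y : Fin n → ℝ := fun i => ‖x i‖ with hy
  have hynn : ∀ i, 0 ≤ y i := fun i => norm_nonneg _
  obtain ⟨i0, hi0⟩ := Function.ne_iff.1 hx0
  have hi0' : x i0 ≠ 0 := by simpa using hi0
  have hy0 : 0 < y i0 := norm_pos_iff.2 hi0'
  have hsub : ∀ i, ‖lam‖ * y i ^ (m - 1) ≤ Ax m n A y i := by
    intro i
    have h1 : ‖lam‖ * y i ^ (m - 1) = ‖lam * x i ^ (m - 1)‖ := by
      rw [norm_mul, norm_pow]
    have h2 : ‖∑ t : Fin (m - 1) → Fin n, (A i t : ℂ) * ∏ j, x (t j)‖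
        ≤ Ax m n A y i := by
      calc ‖∑ t : Fin (m - 1) → Fin n, (A i t : ℂ) * ∏ j, x (t j)‖
          ≤ ∑ t : Fin (m - 1) → Fin n, ‖(A i t : ℂ) * ∏ j, x (t j)‖ := by
            exact
              norm_sum_le Finset.univ (fun t : Fin (m - 1) → Fin n => (A i t : ℂ) * ∏ j, x (t j))
        _ = Ax m n A y i := by
            refine Finset.sum_congr rfl fun t _ => ?_
            rw [norm_mul, norm_prod, Complex.norm_real, Real.norm_eq_abs, abs_of_nonneg (hA i t)]
    rw [h1, ← heq i]
    exact h2
  exact master_upper hm hn hA hirr hmono hg y hynn i0 hy0 (‖lam‖)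
    (norm_nonneg _) hsub

end Final

theorem stmt4 (m n : ℕ) (hm : 2 ≤ m) (hn : 0 < n)
    (A : Fin n → (Fin (m - 1) → Fin n) → ℝ) (hA : ∀ i t, 0 ≤ A i t)
    (hirr : StronglyConnected (tArc m n A))
    (hmono : ∀ i j : Fin n, i ≤ j → sliceSum m n A i ≤ sliceSum m n A j)
    (g : ℕ) (hg : IsLeast {p : ℕ | ∃ γ : ℕ → Fin n, IsCircuit (tArc m n A) p γ} g) :
    (∏ i ∈ Finset.univ.filter (fun i : Fin n => (i : ℕ) < g), sliceSum m n A i) ^ ((g : ℝ)⁻¹)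
      ≤ specRad m n A ∧
    specRad m n A ≤
      (∏ i ∈ Finset.univ.filter (fun i : Fin n => n - g ≤ (i : ℕ)), sliceSum m n A i) ^ ((g : ℝ)⁻¹) := by
  classical
  obtain ⟨γ0, hγ0⟩ := hg.1
  have hg1 : 1 ≤ g := hγ0.1
  have hgR : ((g : ℕ) : ℝ) ≠ 0 := by
    simp only [ne_eq, Nat.cast_eq_zero]
    omega
  have hK : ∀ i, 0 < sliceSum m n A i := Kpos hA hirr hγ0
  set Plow : ℝ := ∏ i ∈ Finset.univ.filter (fun i : Fin n => (i : ℕ) < g), sliceSum m n A i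
    with hPlowdef
  set Ptop : ℝ := ∏ i ∈ Finset.univ.filter (fun i : Fin n => n - g ≤ (i : ℕ)), sliceSum m n A i
    with hPtopdef
  have hPlowpos : 0 < Plow := Finset.prod_pos fun i _ => hK i
  have hPtoppos : 0 < Ptop := Finset.prod_pos fun i _ => hK i
  set S : Set ℝ := {r : ℝ | ∃ lam : ℂ, IsEig m n A lam ∧ ‖lam‖ = r} with hSdef
  have hub : ∀ rr ∈ S, rr ≤ Ptop ^ ((g : ℝ)⁻¹) := by
    rintro rr ⟨lam, hlam, rfl⟩
    have h1 := eig_abs_pow_le hm hn hA hirr hmono hg hlam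
    have h2 : ‖lam‖ = ((‖lam‖ ^ g : ℝ)) ^ ((g : ℝ)⁻¹) := by
      rw [← Real.rpow_natCast (‖lam‖) g, ← Real.rpow_mul (norm_nonneg _),
        mul_inv_cancel₀ hgR, Real.rpow_one]
    rw [h2]
    exact Real.rpow_le_rpow (by positivity) h1 (by positivity)
  have hbdd : BddAbove S := ⟨Ptop ^ ((g : ℝ)⁻¹), fun rr hrr => hub rr hrr⟩
  constructor
  · -- lower bound
    obtain ⟨rL, xL, hrL, hxL0, hsumL, heigL, hlowL⟩ :=
      exists_good_eigpair hm hn hA hirr hmono hg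
    have hxLne : ∃ i, xL i ≠ 0 := by
      by_contra h
      push_neg at h
      rw [Finset.sum_congr rfl (fun i _ => h i)] at hsumL
      simp at hsumL
    obtain ⟨iz, hiz⟩ := hxLne
    have hmemS : rL ∈ S := by
      refine ⟨(rL : ℂ), ⟨fun i => ((xL i : ℝ) : ℂ), ?_, ?_⟩, ?_⟩
      · refine Function.ne_iff.2 ⟨iz, ?_⟩
        simpa using hiz
      · intro i
        have hre := heigL i
        calc ∑ t : Fin (m - 1) → Fin n, (A i t : ℂ) * ∏ j, ((xL (t j) : ℝ) : ℂ)
            = ((Ax m n A xL i : ℝ) : ℂ) := by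
              rw [Ax]
              push_cast
              rfl
          _ = (((rL * xL i ^ (m - 1) : ℝ)) : ℂ) := by rw [hre]
          _ = (rL : ℂ) * ((xL i : ℝ) : ℂ) ^ (m - 1) := by push_cast; rfl
      · rw [Complex.norm_real, Real.norm_eq_abs, abs_of_nonneg hrL]
    have h3 : rL ≤ specRad m n A := by
      rw [specRad]
      exact le_csSup hbdd hmemS
    have h4 : Plow ^ ((g : ℝ)⁻¹) ≤ rL := by
      have h5 : Plow ^ ((g : ℝ)⁻¹) ≤ ((rL ^ g : ℝ)) ^ ((g : ℝ)⁻¹) :=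
        Real.rpow_le_rpow (le_of_lt hPlowpos) hlowL (by positivity)
      have h6 : ((rL ^ g : ℝ)) ^ ((g : ℝ)⁻¹) = rL := by
        rw [← Real.rpow_natCast rL g, ← Real.rpow_mul hrL, mul_inv_cancel₀ hgR, Real.rpow_one]
      rw [h6] at h5
      exact h5
    linarith
  · -- upper bound
    rw [specRad]
    exact Real.sSup_le hub (by positivity)
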